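/- Given a cut-set A for a finite constraint set k, define the typing Γ(k,A) by Γ(k,A)(x) = T if there is a Src-to-x path in k not cut by A, and Γ(k,A)(x) = S otherwise. Then Γ(k,A), viewed as a solution (with Src ↦ T, Snk ↦ S), satisfies every constraint of k that is not incident to an atom of A. -/

import Mathlib

/-- Nodes of the constraint graph: the transient source `Src` (T), the stable
sink `Snk` (S), and the atoms. -/
inductive Node (A : Type) where
  | Src : Node A
  | Snk : Node A
  | atom : A → Node A

/-- `l` is a path from `u` to `v` in the constraint (edge) set `k`:
a finite nonempty sequence of nodes starting at `u`, ending at `v`, with each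
consecutive pair an edge of `k`. -/
def IsPathFrom {A : Type} (k : Set (Node A × Node A)) (u v : Node A)
    (l : List (Node A)) : Prop :=
  List.Chain' (fun x y => (x, y) ∈ k) l ∧ l.head? = some u ∧ l.getLast? = some v

/-- There is a path from `u` to `v` in `k`. -/
def Reaches {A : Type} (k : Set (Node A × Node A)) (u v : Node A) : Prop :=
  ∃ l, IsPathFrom k u v l

/-- Extend a solution (atoms to the two-point lattice, `false = S ⊑ true = T`)
to all nodes, interpreting `Src` as `T` and `Snk` as `S`. -/
def extSol {A : Type} (σ : A → Bool) : Node A → Bool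
  | .Src => true
  | .Snk => false
  | .atom a => σ a

/-- `σ` satisfies every constraint (edge) `u → v` of `k`: `σ(u) ⊑ σ(v)`. -/
def Satisfies {A : Type} (k : Set (Node A × Node A)) (σ : A → Bool) : Prop :=
  ∀ e ∈ k, extSol σ e.1 ≤ extSol σ e.2

/-- The set of atoms `As` cuts the path `l`: some atom of `As` occurs on `l`. -/
def CutsList {A : Type} (As : Set A) (l : List (Node A)) : Prop :=
  ∃ a ∈ As, Node.atom a ∈ l

/-- `As` is a cut-set for `k`: it cuts every `Src`-to-`Snk` path of `k`. -/
def IsCutSet {A : Type} (As : Set A) (k : Set (Node A × Node A)) : Prop :=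
  ∀ l, IsPathFrom k Node.Src Node.Snk l → CutsList As l

/-- The edge `e` is incident to an atom of `As`. -/
def Incident {A : Type} (As : Set A) (e : Node A × Node A) : Prop :=
  (∃ a ∈ As, e.1 = Node.atom a) ∨ (∃ a ∈ As, e.2 = Node.atom a)

-- The canonical assignment: `T` iff `Src` reaches the atom in `k`.
open Classical in
noncomputable def canonSol {A : Type} (k : Set (Node A × Node A)) : A → Bool :=
  fun a => if Reaches k Node.Src (Node.atom a) then true else false

-- The typing extracted from a cut-set: `T` iff there is an uncut `Src`-to-`x`
-- path in `k`.
open Classical in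
noncomputable def gammaSol {A : Type} (k : Set (Node A × Node A)) (As : Set A) :
    A → Bool :=
  fun x =>
    if ∃ l, IsPathFrom k Node.Src (Node.atom x) l ∧ ¬ CutsList As l then true
    else false

lemma isPathFrom_append {A : Type} {k : Set (Node A × Node A)} {u v w : Node A}
    {l : List (Node A)} (h : IsPathFrom k u v l) (he : (v, w) ∈ k) :
    IsPathFrom k u w (l ++ [w]) := by
  obtain ⟨hc, hh, hl⟩ := h
  refine ⟨?_, ?_, ?_⟩
  · cases l with
    | nil => simp at hh
    | cons x xs =>
      apply List.isChain_append.mpr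
      refine ⟨hc, List.isChain_singleton _, ?_⟩
      intro a ha b hb
      simp at hb; subst hb
      have hav : a = v := by
        rw [ha] at hl; exact Option.some.inj hl
      rw [hav]; exact he
  · cases l with
    | nil => simp at hh
    | cons x xs => simpa using hh
  · simp

/-- Given a cut-set `As` for the finite constraint set `k`, the typing
`Γ(k,As)` (viewed as a solution, with `Src ↦ T` and `Snk ↦ S`) satisfies every
constraint of `k` not incident to an atom of `As`. -/
theorem gammaSol_satisfies_nonIncident {A : Type}
    (k : Set (Node A × Node A)) (hfin : k.Finite)
    (As : Set A) (hcut : IsCutSet As k) :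
    ∀ e ∈ k, ¬ Incident As e →
      extSol (gammaSol k As) e.1 ≤ extSol (gammaSol k As) e.2 := by
  classical
  rintro ⟨u, v⟩ hk hinc
  simp only [Incident, not_or, not_exists, not_and] at hinc
  obtain ⟨h1, h2⟩ := hinc
  -- helper: an uncut path from Src to u yields the conclusion
  have key : (∃ l, IsPathFrom k Node.Src u l ∧ ¬ CutsList As l) →
      extSol (gammaSol k As) v = true := by
    rintro ⟨l, hp, hnc⟩
    have hp' := isPathFrom_append hp hk
    have hnc' : ¬ CutsList As (l ++ [v]) := by
      rintro ⟨a, ha, hmem⟩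
      rcases List.mem_append.mp hmem with h | h
      · exact hnc ⟨a, ha, h⟩
      · simp at h
        exact h2 a ha h.symm
    cases v with
    | Src => rfl
    | Snk => exact absurd (hcut _ hp') hnc'
    | atom b =>
      have hex : ∃ l, IsPathFrom k Node.Src (Node.atom b) l ∧ ¬ CutsList As l :=
        ⟨_, hp', hnc'⟩
      simp [extSol, gammaSol, hex]
  cases u with
  | Snk => simp [extSol]
  | Src =>
    have := key ⟨[Node.Src], ⟨List.isChain_singleton _, by simp, by simp⟩, by
      rintro ⟨a, _, hmem⟩; simp at hmem⟩
    simp [extSol] at this ⊢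
    rw [this]
  | atom a =>
    by_cases h : ∃ l, IsPathFrom k Node.Src (Node.atom a) l ∧ ¬ CutsList As l
    · rw [key h]; exact Bool.le_true _
    · have hfa : gammaSol k As a = false := by simp [gammaSol, h]
      simp [extSol, hfa]
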